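/- For an arbitrary SLP 𝒯 = {X_1 → expr_1, …, X_n → expr_n} and integer q ≥ 2, the number of edges in the right q-gram neighbor graph G_q of 𝒯 is at most 2n. -/
import Mathlib


/-- A straight line program over alphabet `α`: variables are `Fin n` (variable
`X_i` of the paper corresponds to index `i-1`), each with either a terminal
rule (a single character) or a nonterminal rule `X_i → X_j X_k` with `j,k < i`. -/
structure SLP (α : Type) where
  n : ℕ
  npos : 0 < n
  rule : Fin n → α ⊕ (Fin n × Fin n)
  wf : ∀ i jk, rule i = Sum.inr jk → jk.1 < i ∧ jk.2 < i

namespace SLP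

variable {α : Type}

/-- the string `val(X_i)` derived by a variable -/
def val (S : SLP α) (i : Fin S.n) : List α :=
  match h : S.rule i with
  | Sum.inl a => [a]
  | Sum.inr jk =>
    have _h1 := (S.wf i jk h).1
    have _h2 := (S.wf i jk h).2
    S.val jk.1 ++ S.val jk.2
termination_by i.val

/-- the last variable `X_n` -/
def lastIdx (S : SLP α) : Fin S.n := ⟨S.n - 1, Nat.sub_lt S.npos Nat.one_pos⟩

/-- the string `T` represented by the SLP -/
def text (S : SLP α) : List α := S.val S.lastIdx

/-- `T([i:j])`: the (1-based, inclusive) substring of a string -/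
def substr (T : List α) (i j : ℕ) : List α := (T.drop (i - 1)).take (j + 1 - i)

/-- `pre(T,q)` -/
def spre (T : List α) (q : ℕ) : List α := T.take q

/-- `suf(T,q)` -/
def ssuf (T : List α) (q : ℕ) : List α := T.drop (T.length - q)

/-- `pre([b:e],q)` for intervals of positions -/
def ipre (b e q : ℕ) : Finset ℕ := Finset.Icc b (min (b + q - 1) e)

/-- `suf([b:e],q)` for intervals of positions -/
def isuf (b e q : ℕ) : Finset ℕ := Finset.Icc (max b (e + 1 - q)) e

/-- `Occ(T,P)`: the set of (1-based) occurrences of `P` in `T` -/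
def Occ [DecidableEq α] (T P : List α) : Finset ℕ :=
  (Finset.Icc 1 T.length).filter fun k => substr T k (k + P.length - 1) = P

/-- the multiset of labels of the nodes of the derivation tree rooted at
a node labeled `X_i` -/
def occsFrom (S : SLP α) (i : Fin S.n) : Multiset (Fin S.n) :=
  match h : S.rule i with
  | Sum.inl _ => {i}
  | Sum.inr jk =>
    have _h1 := (S.wf i jk h).1
    have _h2 := (S.wf i jk h).2
    i ::ₘ (S.occsFrom jk.1 + S.occsFrom jk.2)
termination_by i.val

/-- `vOcc(X_i)`: the number of nodes of the derivation tree labeled `X_i` -/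
def vOcc (S : SLP α) (i : Fin S.n) : ℕ := (S.occsFrom S.lastIdx).count i

/-- the string `t_i = suf(val(X_{ℓ(i)}),q-1) pre(val(X_{r(i)}),q-1)`
(and `[]` for a terminal rule) -/
def tstr (S : SLP α) (q : ℕ) (i : Fin S.n) : List α :=
  match S.rule i with
  | Sum.inl _ => []
  | Sum.inr jk => ssuf (S.val jk.1) (q - 1) ++ spre (S.val jk.2) (q - 1)

/-- `label(X_i) = t_i([q:|t_i|])` -/
def labelStr (S : SLP α) (q : ℕ) (i : Fin S.n) : List α := (S.tstr q i).drop (q - 1)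

/-- Nodes of the derivation tree are represented by the path from the root
(`false` = go to left child, `true` = go to right child).  `descend i p`
returns the label of the node reached from a node labeled `X_i` by path `p`. -/
def descend (S : SLP α) : Fin S.n → List Bool → Option (Fin S.n)
  | i, [] => some i
  | i, b :: p =>
    match S.rule i with
    | Sum.inl _ => none
    | Sum.inr jk => S.descend (if b then jk.2 else jk.1) p

/-- the label of the node of the derivation tree reached by path `p` from the root -/
def nodeVar (S : SLP α) (p : List Bool) : Option (Fin S.n) := S.descend S.lastIdx p

/-- `p` is a valid node of the derivation tree -/
def IsNode (S : SLP α) (p : List Bool) : Prop := (S.nodeVar p).isSome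

/-- the 0-based offset in `val(X_i)` of the part derived below path `p` -/
def offsetFrom (S : SLP α) : Fin S.n → List Bool → ℕ
  | _, [] => 0
  | i, b :: p =>
    match S.rule i with
    | Sum.inl _ => 0
    | Sum.inr jk =>
      if b then (S.val jk.1).length + S.offsetFrom jk.2 p
      else S.offsetFrom jk.1 p

/-- the 0-based offset in `T` of the interval derived by node `p` -/
def offset (S : SLP α) (p : List Bool) : ℕ := S.offsetFrom S.lastIdx p

/-- `itv(v)`: the (1-based) interval of positions of `T` derived by node `p` -/
def itv (S : SLP α) (p : List Bool) : Finset ℕ :=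
  match S.nodeVar p with
  | some i => Finset.Icc (S.offset p + 1) (S.offset p + (S.val i).length)
  | none => ∅

/-- `p = ξ(b,e)`: `p` is the deepest node whose interval contains `[b:e]`,
i.e. `itv(p) ⊇ [b:e]` and no proper descendant of `p` satisfies this. -/
def Stabs (S : SLP α) (p : List Bool) (b e : ℕ) : Prop :=
  S.IsNode p ∧ Finset.Icc b e ⊆ S.itv p ∧
  ∀ p' : List Bool, p <+: p' → p ≠ p' → S.IsNode p' → ¬ Finset.Icc b e ⊆ S.itv p'

/-- `X_j` is a right `q`-gram neighbor of `X_i` -/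
def RightNbr (S : SLP α) (q : ℕ) (i j : Fin S.n) : Prop :=
  i ≠ j ∧ ∃ u p p', 1 ≤ u ∧ u + q ≤ S.text.length ∧
    S.Stabs p u (u + q - 1) ∧ S.nodeVar p = some i ∧
    S.Stabs p' (u + 1) (u + q) ∧ S.nodeVar p' = some j

/-- `lm_q(X_i)`: the last variable of length `≥ q` on the sequence `i, ℓ(i), ℓ(ℓ(i)), …`
(meaningful when `|val(X_i)| ≥ q`) -/
def lm (S : SLP α) (q : ℕ) (i : Fin S.n) : Fin S.n :=
  match h : S.rule i with
  | Sum.inl _ => i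
  | Sum.inr jk =>
    have := (S.wf i jk h).1
    if (S.val jk.1).length < q then i else S.lm q jk.1
termination_by i.val

/-- `rm_q(X_i)`: the last variable of length `≥ q` on the sequence `i, r(i), r(r(i)), …` -/
def rm (S : SLP α) (q : ℕ) (i : Fin S.n) : Fin S.n :=
  match h : S.rule i with
  | Sum.inl _ => i
  | Sum.inr jk =>
    have := (S.wf i jk h).2
    if (S.val jk.2).length < q then i else S.rm q jk.2
termination_by i.val

/-- `lm_q` returning `null` (`none`) when `|val(X_i)| < q` -/
def lmOpt (S : SLP α) (q : ℕ) (i : Fin S.n) : Option (Fin S.n) :=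
  if (S.val i).length < q then none else some (S.lm q i)

/-- `rm_q` returning `null` (`none`) when `|val(X_i)| < q` -/
def rmOpt (S : SLP α) (q : ℕ) (i : Fin S.n) : Option (Fin S.n) :=
  if (S.val i).length < q then none else some (S.rm q i)

/-- `LSpine S i k`: `k` occurs in the sequence `i, ℓ(i), ℓ(ℓ(i)), …`
(the leftmost path of the derivation subtree rooted at a node labeled `X_i`) -/
inductive LSpine (S : SLP α) : Fin S.n → Fin S.n → Prop
  | refl (i : Fin S.n) : LSpine S i i
  | step {i k : Fin S.n} {jk : Fin S.n × Fin S.n} :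
      S.rule i = Sum.inr jk → LSpine S jk.1 k → LSpine S i k

end SLP
namespace SLP
variable {α : Type} (S : SLP α)

theorem val_inl {i : Fin S.n} {a : α} (h : S.rule i = Sum.inl a) : S.val i = [a] := by
  rw [SLP.val]; split <;> simp_all

theorem val_inr {i : Fin S.n} {jk} (h : S.rule i = Sum.inr jk) :
    S.val i = S.val jk.1 ++ S.val jk.2 := by
  rw [SLP.val]; split <;> simp_all

theorem val_pos (i : Fin S.n) : 0 < (S.val i).length := by
  rcases h : S.rule i with a | jk
  · simp [S.val_inl h]
  · have h1 := (S.wf i jk h).1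
    have := val_pos jk.1
    simp [S.val_inr h]; omega
termination_by i.val

theorem lm_inl {i : Fin S.n} {a : α} (q : ℕ) (h : S.rule i = Sum.inl a) : S.lm q i = i := by
  rw [SLP.lm]; split <;> simp_all

theorem lm_inr {i : Fin S.n} {jk} (q : ℕ) (h : S.rule i = Sum.inr jk) :
    S.lm q i = if (S.val jk.1).length < q then i else S.lm q jk.1 := by
  rw [SLP.lm]; split <;> simp_all

theorem rm_inl {i : Fin S.n} {a : α} (q : ℕ) (h : S.rule i = Sum.inl a) : S.rm q i = i := by
  rw [SLP.rm]; split <;> simp_all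

theorem rm_inr {i : Fin S.n} {jk} (q : ℕ) (h : S.rule i = Sum.inr jk) :
    S.rm q i = if (S.val jk.2).length < q then i else S.rm q jk.2 := by
  rw [SLP.rm]; split <;> simp_all

theorem descend_append (i : Fin S.n) (p p' : List Bool) :
    S.descend i (p ++ p') = (S.descend i p).bind (fun j => S.descend j p') := by
  induction p generalizing i with
  | nil => simp [descend]
  | cons b p ih =>
    simp only [List.cons_append, descend]
    rcases h : S.rule i with a | jk
    · simp
    · exact ih _

theorem offsetFrom_append {i j : Fin S.n} {p : List Bool} (p' : List Bool)
    (h : S.descend i p = some j) :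
    S.offsetFrom i (p ++ p') = S.offsetFrom i p + S.offsetFrom j p' := by
  induction p generalizing i with
  | nil => simp [descend] at h; subst h; simp [offsetFrom]
  | cons b p ih =>
    simp only [descend] at h
    rcases hr : S.rule i with a | jk <;> simp [hr] at h
    simp only [List.cons_append, offsetFrom, hr, List.append_eq]
    rcases b with _ | _
    · simp only [if_neg Bool.false_ne_true, Bool.false_eq_true, if_false] at h ⊢
      rw [ih h]
    · simp only [if_pos rfl, if_true] at h ⊢
      rw [ih h]; omega

end SLP
namespace SLP
variable {α : Type} (S : SLP α)

theorem val_len {i : Fin S.n} {jk} (h : S.rule i = Sum.inr jk) :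
    (S.val i).length = (S.val jk.1).length + (S.val jk.2).length := by
  simp [S.val_inr h]

theorem nodeVar_append (p p' : List Bool) :
    S.nodeVar (p ++ p') = (S.nodeVar p).bind (fun i => S.descend i p') :=
  S.descend_append _ p p'

theorem offset_append {p : List Bool} {i : Fin S.n} (p' : List Bool)
    (h : S.nodeVar p = some i) :
    S.offset (p ++ p') = S.offset p + S.offsetFrom i p' :=
  S.offsetFrom_append p' h

theorem nodeVar_childL {p : List Bool} {i : Fin S.n} {jk}
    (hp : S.nodeVar p = some i) (hr : S.rule i = Sum.inr jk) :
    S.nodeVar (p ++ [false]) = some jk.1 := by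
  rw [nodeVar_append, hp]; simp [descend, hr]

theorem nodeVar_childR {p : List Bool} {i : Fin S.n} {jk}
    (hp : S.nodeVar p = some i) (hr : S.rule i = Sum.inr jk) :
    S.nodeVar (p ++ [true]) = some jk.2 := by
  rw [nodeVar_append, hp]; simp [descend, hr]

theorem offset_childL {p : List Bool} {i : Fin S.n} {jk}
    (hp : S.nodeVar p = some i) (hr : S.rule i = Sum.inr jk) :
    S.offset (p ++ [false]) = S.offset p := by
  rw [S.offset_append _ hp]; simp [offsetFrom, hr]

theorem offset_childR {p : List Bool} {i : Fin S.n} {jk}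
    (hp : S.nodeVar p = some i) (hr : S.rule i = Sum.inr jk) :
    S.offset (p ++ [true]) = S.offset p + (S.val jk.1).length := by
  rw [S.offset_append _ hp]; simp [offsetFrom, hr]

theorem itv_eq {p : List Bool} {i : Fin S.n} (hp : S.nodeVar p = some i) :
    S.itv p = Finset.Icc (S.offset p + 1) (S.offset p + (S.val i).length) := by
  simp [itv, hp]

theorem itv_none {p : List Bool} (hp : S.nodeVar p = none) : S.itv p = ∅ := by
  simp [itv, hp]

theorem child_subset (p : List Bool) (b : Bool) : S.itv (p ++ [b]) ⊆ S.itv p := by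
  rcases hp : S.nodeVar p with _ | i
  · have : S.nodeVar (p ++ [b]) = none := by rw [nodeVar_append, hp]; rfl
    simp [S.itv_none this]
  rcases hr : S.rule i with a | jk
  · have : S.nodeVar (p ++ [b]) = none := by
      rw [nodeVar_append, hp]; simp [descend, hr]
    simp [S.itv_none this]
  · rw [S.itv_eq hp]
    have hl := S.val_len hr
    have h2 := S.val_pos jk.2
    have h1 := S.val_pos jk.1
    rcases b with _ | _
    · rw [S.itv_eq (S.nodeVar_childL hp hr), S.offset_childL hp hr]
      apply Finset.Icc_subset_Icc le_rfl; omega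
    · rw [S.itv_eq (S.nodeVar_childR hp hr), S.offset_childR hp hr]
      apply Finset.Icc_subset_Icc <;> omega

theorem itv_prefix (p s : List Bool) : S.itv (p ++ s) ⊆ S.itv p := by
  induction s generalizing p with
  | nil => simp
  | cons b s ih =>
    have : p ++ b :: s = (p ++ [b]) ++ s := by simp
    rw [this]
    exact (ih (p ++ [b])).trans (S.child_subset p b)

theorem nodeVar_of_append {p s : List Bool} {j : Fin S.n}
    (h : S.nodeVar (p ++ s) = some j) : ∃ i, S.nodeVar p = some i := by
  rw [nodeVar_append] at h
  rcases hp : S.nodeVar p with _ | i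
  · rw [hp] at h; simp at h
  · exact ⟨i, rfl⟩

theorem list_trichotomy : ∀ (p p' : List Bool), p <+: p' ∨ p' <+: p ∨
    ∃ (r : List Bool) (b : Bool) (s s' : List Bool),
      p = r ++ b :: s ∧ p' = r ++ (!b) :: s' := by
  intro p
  induction p with
  | nil => intro p'; exact Or.inl List.nil_prefix
  | cons a p ih =>
    intro p'
    rcases p' with _ | ⟨a', p'⟩
    · exact Or.inr (Or.inl List.nil_prefix)
    by_cases hab : a = a'
    · subst hab
      rcases ih p' with h | h | ⟨r, b, s, s', h1, h2⟩
      · exact Or.inl (List.cons_prefix_cons.mpr ⟨rfl, h⟩)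
      · exact Or.inr (Or.inl (List.cons_prefix_cons.mpr ⟨rfl, h⟩))
      · exact Or.inr (Or.inr ⟨a :: r, b, s, s', by simp [h1], by simp [h2]⟩)
    · refine Or.inr (Or.inr ⟨[], a, p, p', by simp, ?_⟩)
      simp
      cases a <;> cases a' <;> simp_all

theorem comparable_of_mem {p p' : List Bool} {x : ℕ}
    (hx : x ∈ S.itv p) (hx' : x ∈ S.itv p') : p <+: p' ∨ p' <+: p := by
  rcases list_trichotomy p p' with h | h | ⟨r, b, s, s', h1, h2⟩
  · exact Or.inl h
  · exact Or.inr h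
  exfalso
  subst h1; subst h2
  have m1 : x ∈ S.itv (r ++ [b]) := S.itv_prefix (r ++ [b]) s (by simpa using hx)
  have m2 : x ∈ S.itv (r ++ [!b]) := S.itv_prefix (r ++ [!b]) s' (by simpa using hx')
  rcases hp : S.nodeVar r with _ | i
  · have : S.nodeVar (r ++ [b]) = none := by rw [nodeVar_append, hp]; rfl
    rw [S.itv_none this] at m1; simp at m1
  rcases hr : S.rule i with a | jk
  · have : S.nodeVar (r ++ [b]) = none := by
      rw [nodeVar_append, hp]; simp [descend, hr]
    rw [S.itv_none this] at m1; simp at m1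
  have e1 : x ∈ S.itv (r ++ [false]) := by cases b; exact m1; exact m2
  have e2 : x ∈ S.itv (r ++ [true]) := by cases b; exact m2; exact m1
  rw [S.itv_eq (S.nodeVar_childL hp hr), S.offset_childL hp hr, Finset.mem_Icc] at e1
  rw [S.itv_eq (S.nodeVar_childR hp hr), S.offset_childR hp hr, Finset.mem_Icc] at e2
  omega

end SLP
namespace SLP
variable {α : Type} (S : SLP α)

theorem lm_char (q u : ℕ) (hq : 2 ≤ q) (s : List Bool) : ∀ (C : List Bool) (k j : Fin S.n),
    S.nodeVar C = some k → S.offset C = u →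
    S.nodeVar (C ++ s) = some j →
    Finset.Icc (u+1) (u+q) ⊆ S.itv (C ++ s) →
    (∀ s', s' ≠ [] → S.IsNode ((C ++ s) ++ s') →
      ¬ Finset.Icc (u+1) (u+q) ⊆ S.itv ((C ++ s) ++ s')) →
    j = S.lm q k := by
  induction s with
  | nil =>
    intro C k j hC ho hj hsub hmax
    simp only [List.append_nil] at hj hsub hmax
    have hjk : j = k := by rw [hC] at hj; exact (Option.some_inj.mp hj).symm
    subst hjk
    rcases hr : S.rule j with a | jk
    · exact (S.lm_inl q hr).symm
    by_cases hlen : (S.val jk.1).length < q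
    · rw [S.lm_inr q hr, if_pos hlen]
    exfalso
    have hL := S.nodeVar_childL hC hr
    have hoL := S.offset_childL hC hr
    refine hmax [false] (by simp) ?_ ?_
    · rw [IsNode, hL]; rfl
    · rw [S.itv_eq hL, hoL, ho]
      exact Finset.Icc_subset_Icc le_rfl (by omega)
  | cons c s ih =>
    intro C k j hC ho hj hsub hmax
    -- rule k must be inr
    have hj' : S.descend k (c :: s) = some j := by
      rw [nodeVar_append, hC] at hj; exact hj
    rcases hr : S.rule k with a | jk
    · rw [descend, hr] at hj'; exact absurd hj' (by simp)
    -- c must be false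
    have hass : ∀ b : Bool, C ++ b :: s = (C ++ [b]) ++ s := by intro b; simp
    rcases c with _ | _
    · -- left child
      have hL := S.nodeVar_childL hC hr
      have hoL : S.offset (C ++ [false]) = u := by rw [S.offset_childL hC hr, ho]
      rw [hass] at hj hsub hmax
      -- |val jk.1| ≥ q
      have hm : u + q ∈ S.itv (C ++ [false]) :=
        S.itv_prefix _ s (hsub (Finset.mem_Icc.mpr ⟨by omega, le_rfl⟩))
      rw [S.itv_eq hL, hoL, Finset.mem_Icc] at hm
      have hlen : ¬ (S.val jk.1).length < q := by omega
      rw [S.lm_inr q hr, if_neg hlen]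
      exact ih (C ++ [false]) jk.1 j hL hoL hj hsub hmax
    · -- right child: contradiction
      exfalso
      have hR := S.nodeVar_childR hC hr
      have hoR := S.offset_childR hC hr
      rw [hass] at hsub
      have hm : u + 1 ∈ S.itv (C ++ [true]) :=
        S.itv_prefix _ s (hsub (Finset.mem_Icc.mpr ⟨le_rfl, by omega⟩))
      rw [S.itv_eq hR, hoR, ho, Finset.mem_Icc] at hm
      have := S.val_pos jk.1
      omega

theorem rm_char (q u : ℕ) (s : List Bool) : ∀ (C : List Bool) (k j : Fin S.n),
    S.nodeVar C = some k → S.offset C + (S.val k).length = u + q - 1 →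
    S.nodeVar (C ++ s) = some j →
    Finset.Icc u (u+q-1) ⊆ S.itv (C ++ s) →
    (∀ s', s' ≠ [] → S.IsNode ((C ++ s) ++ s') →
      ¬ Finset.Icc u (u+q-1) ⊆ S.itv ((C ++ s) ++ s')) →
    (1 ≤ u) → (2 ≤ q) →
    j = S.rm q k := by
  induction s with
  | nil =>
    intro C k j hC ho hj hsub hmax hu hq
    simp only [List.append_nil] at hj hsub hmax
    have hjk : j = k := by rw [hC] at hj; exact (Option.some_inj.mp hj).symm
    subst hjk
    rcases hr : S.rule j with a | jk
    · exact (S.rm_inl q hr).symm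
    by_cases hlen : (S.val jk.2).length < q
    · rw [S.rm_inr q hr, if_pos hlen]
    exfalso
    have hR := S.nodeVar_childR hC hr
    have hoR := S.offset_childR hC hr
    have hvl := S.val_len hr
    refine hmax [true] (by simp) ?_ ?_
    · rw [IsNode, hR]; rfl
    · rw [S.itv_eq hR, hoR]
      exact Finset.Icc_subset_Icc (by omega) (by omega)
  | cons c s ih =>
    intro C k j hC ho hj hsub hmax hu hq
    have hj' : S.descend k (c :: s) = some j := by
      rw [nodeVar_append, hC] at hj; exact hj
    rcases hr : S.rule k with a | jk
    · rw [descend, hr] at hj'; exact absurd hj' (by simp)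
    have hass : ∀ b : Bool, C ++ b :: s = (C ++ [b]) ++ s := by intro b; simp
    have hvl := S.val_len hr
    rcases c with _ | _
    · -- left child: contradiction
      exfalso
      have hL := S.nodeVar_childL hC hr
      have hoL := S.offset_childL hC hr
      rw [hass] at hsub
      have hm : u + q - 1 ∈ S.itv (C ++ [false]) :=
        S.itv_prefix _ s (hsub (Finset.mem_Icc.mpr ⟨by omega, le_rfl⟩))
      rw [S.itv_eq hL, hoL, Finset.mem_Icc] at hm
      have := S.val_pos jk.2
      omega
    · -- right child
      have hR := S.nodeVar_childR hC hr
      have hoR : S.offset (C ++ [true]) + (S.val jk.2).length = u + q - 1 := by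
        rw [S.offset_childR hC hr]; omega
      rw [hass] at hj hsub hmax
      have hm : u ∈ S.itv (C ++ [true]) :=
        S.itv_prefix _ s (hsub (Finset.mem_Icc.mpr ⟨le_rfl, by omega⟩))
      rw [S.itv_eq hR, Finset.mem_Icc] at hm
      have hlen : ¬ (S.val jk.2).length < q := by
        rw [S.offset_childR hC hr] at hoR hm; omega
      rw [S.rm_inr q hr, if_neg hlen]
      exact ih (C ++ [true]) jk.2 j hR hoR hj hsub hmax hu hq

end SLP
namespace SLP
variable {α : Type} (S : SLP α)

theorem ne_append {p s : List Bool} (hs : s ≠ []) : p ≠ p ++ s := by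
  intro hEq
  have := congrArg List.length hEq
  simp at this
  exact hs this

theorem edge_form (q : ℕ) (hq : 2 ≤ q) {i j : Fin S.n} (h : S.RightNbr q i j) :
    (∃ jk, S.rule i = Sum.inr jk ∧ j = S.lm q jk.2) ∨
    (∃ jk, S.rule j = Sum.inr jk ∧ i = S.rm q jk.1) := by
  obtain ⟨hij, u, p, p', hu1, hu2, ⟨hnp, hsubp, hmaxp⟩, hpi, ⟨hnp', hsubp', hmaxp'⟩, hpj⟩ := h
  have hmem1 : u + 1 ∈ S.itv p := hsubp (Finset.mem_Icc.mpr ⟨by omega, by omega⟩)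
  have hmem1' : u + 1 ∈ S.itv p' := hsubp' (Finset.mem_Icc.mpr ⟨le_rfl, by omega⟩)
  rcases S.comparable_of_mem hmem1 hmem1' with hpre | hpre
  · -- p is an ancestor of p' : left disjunct
    left
    obtain ⟨t, rfl⟩ := hpre
    rcases t with _ | ⟨c, s⟩
    · exfalso
      simp only [List.append_nil] at hpj
      rw [hpi] at hpj
      exact hij (Option.some_inj.mp hpj)
    -- rule i is inr
    have hj' : S.descend i (c :: s) = some j := by
      rw [nodeVar_append, hpi] at hpj; exact hpj
    rcases hr : S.rule i with a | jk
    · rw [descend, hr] at hj'; exact absurd hj' (by simp)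
    refine ⟨jk, by simp [hr], ?_⟩
    have hass : p ++ c :: s = (p ++ [c]) ++ s := by simp
    rw [hass] at hpj hsubp' hmaxp'
    set C := p ++ [c] with hCdef
    -- itv facts about C
    have hsubC : Finset.Icc (u+1) (u+q) ⊆ S.itv C :=
      fun x hx => S.itv_prefix C s (hsubp' hx)
    have hCnode : S.nodeVar C = some (if c then jk.2 else jk.1) := by
      rcases c with _ | _
      · simpa using S.nodeVar_childL hpi hr
      · simpa using S.nodeVar_childR hpi hr
    have hnotC : ¬ Finset.Icc u (u+q-1) ⊆ S.itv C := by
      refine hmaxp C ⟨[c], rfl⟩ (ne_append (by simp)) ?_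
      rw [IsNode, hCnode]; rfl
    -- offset C = u
    set k : Fin S.n := if c then jk.2 else jk.1 with hk
    have hCitv := S.itv_eq hCnode
    have hm1 : u + 1 ∈ S.itv C := hsubC (Finset.mem_Icc.mpr ⟨le_rfl, by omega⟩)
    have hm2 : u + q ∈ S.itv C := hsubC (Finset.mem_Icc.mpr ⟨by omega, le_rfl⟩)
    rw [hCitv, Finset.mem_Icc] at hm1 hm2
    have hoC : S.offset C = u := by
      by_contra hne
      have hlt : S.offset C + 1 ≤ u := by omega
      exact hnotC (by rw [hCitv]; exact Finset.Icc_subset_Icc hlt (by omega))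
    -- c = true
    have hmu : u ∈ S.itv p := hsubp (Finset.mem_Icc.mpr ⟨le_rfl, by omega⟩)
    rw [S.itv_eq hpi, Finset.mem_Icc] at hmu
    rcases c with _ | _
    · exfalso
      have := S.offset_childL hpi hr
      rw [← hCdef] at this
      omega
    have hkk : k = jk.2 := by simp [hk]
    rw [hkk] at hCnode
    -- apply lm_char
    refine S.lm_char q u hq s C jk.2 j hCnode hoC hpj hsubp' ?_
    intro s' hs' hnode hsub
    exact hmaxp' ((C ++ s) ++ s') ⟨s', rfl⟩ (ne_append hs') hnode hsub
  · -- p' is an ancestor of p : right disjunct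
    right
    obtain ⟨t, rfl⟩ := hpre
    rcases t with _ | ⟨c, s⟩
    · exfalso
      simp only [List.append_nil] at hpi
      rw [hpj] at hpi
      exact hij (Option.some_inj.mp hpi).symm
    have hi' : S.descend j (c :: s) = some i := by
      rw [nodeVar_append, hpj] at hpi; exact hpi
    rcases hr : S.rule j with a | jk
    · rw [descend, hr] at hi'; exact absurd hi' (by simp)
    refine ⟨jk, by simp [hr], ?_⟩
    have hass : p' ++ c :: s = (p' ++ [c]) ++ s := by simp
    rw [hass] at hpi hsubp hmaxp
    set C := p' ++ [c] with hCdef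
    have hsubC : Finset.Icc u (u+q-1) ⊆ S.itv C :=
      fun x hx => S.itv_prefix C s (hsubp hx)
    have hCnode : S.nodeVar C = some (if c then jk.2 else jk.1) := by
      rcases c with _ | _
      · simpa using S.nodeVar_childL hpj hr
      · simpa using S.nodeVar_childR hpj hr
    have hnotC : ¬ Finset.Icc (u+1) (u+q) ⊆ S.itv C := by
      refine hmaxp' C ⟨[c], rfl⟩ (ne_append (by simp)) ?_
      rw [IsNode, hCnode]; rfl
    set k : Fin S.n := if c then jk.2 else jk.1 with hk
    have hCitv := S.itv_eq hCnode
    have hm1 : u ∈ S.itv C := hsubC (Finset.mem_Icc.mpr ⟨le_rfl, by omega⟩)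
    have hm2 : u + q - 1 ∈ S.itv C := hsubC (Finset.mem_Icc.mpr ⟨by omega, le_rfl⟩)
    rw [hCitv, Finset.mem_Icc] at hm1 hm2
    have hend : S.offset C + (S.val k).length = u + q - 1 := by
      by_contra hne
      have hlt : u + q ≤ S.offset C + (S.val k).length := by omega
      exact hnotC (by rw [hCitv]; exact Finset.Icc_subset_Icc (by omega) hlt)
    -- c = false
    have hvl := S.val_len hr
    have hmu : u + q ∈ S.itv p' := hsubp' (Finset.mem_Icc.mpr ⟨by omega, le_rfl⟩)
    rw [S.itv_eq hpj, Finset.mem_Icc] at hmu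
    rcases c with _ | _
    case true =>
      exfalso
      have hoR := S.offset_childR hpj hr
      rw [← hCdef] at hoR
      have hkk : k = jk.2 := by simp [hk]
      rw [hkk] at hend
      omega
    case false =>
      have hoL := S.offset_childL hpj hr
      rw [← hCdef] at hoL
      have hkk : k = jk.1 := by simp [hk]
      rw [hkk] at hCnode hend
      refine S.rm_char q u s C jk.1 i hCnode hend hpi hsubp ?_ hu1 hq
      intro s' hs' hnode hsub
      exact hmaxp ((C ++ s) ++ s') ⟨s', rfl⟩ (ne_append hs') hnode hsub

def fL (S : SLP α) (q : ℕ) (k : Fin S.n) : Fin S.n × Fin S.n :=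
  match S.rule k with
  | Sum.inl _ => (k, k)
  | Sum.inr jk => (k, S.lm q jk.2)

def fR (S : SLP α) (q : ℕ) (k : Fin S.n) : Fin S.n × Fin S.n :=
  match S.rule k with
  | Sum.inl _ => (k, k)
  | Sum.inr jk => (S.rm q jk.1, k)

theorem fL_inr {k : Fin S.n} {jk} (q : ℕ) (h : S.rule k = Sum.inr jk) :
    S.fL q k = (k, S.lm q jk.2) := by unfold fL; split <;> simp_all

theorem fR_inr {k : Fin S.n} {jk} (q : ℕ) (h : S.rule k = Sum.inr jk) :
    S.fR q k = (S.rm q jk.1, k) := by unfold fR; split <;> simp_all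

end SLP

/-- the right `q`-gram neighbor graph of an SLP of size `n`
has at most `2n` edges. -/
theorem stmt5 {α : Type} (q : ℕ) (hq : 2 ≤ q) (S : SLP α) :
    Set.ncard {ij : Fin S.n × Fin S.n | S.RightNbr q ij.1 ij.2} ≤ 2 * S.n := by
  have hsub : {ij : Fin S.n × Fin S.n | S.RightNbr q ij.1 ij.2} ⊆
      Set.range (S.fL q) ∪ Set.range (S.fR q) := by
    rintro ⟨i, j⟩ h
    rcases S.edge_form q hq h with ⟨jk, hr, hj⟩ | ⟨jk, hr, hi⟩
    · exact Or.inl ⟨i, by rw [S.fL_inr q hr, ← hj]⟩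
    · exact Or.inr ⟨j, by rw [S.fR_inr q hr, ← hi]⟩
  calc Set.ncard {ij : Fin S.n × Fin S.n | S.RightNbr q ij.1 ij.2}
      ≤ Set.ncard (Set.range (S.fL q) ∪ Set.range (S.fR q)) :=
        Set.ncard_le_ncard hsub (Set.toFinite _)
    _ ≤ Set.ncard (Set.range (S.fL q)) + Set.ncard (Set.range (S.fR q)) :=
        Set.ncard_union_le _ _
    _ ≤ S.n + S.n := by
        have key : ∀ f : Fin S.n → Fin S.n × Fin S.n, (Set.range f).ncard ≤ S.n := by
          intro f
          rw [← Set.image_univ]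
          calc (f '' Set.univ).ncard
              ≤ (Set.univ : Set (Fin S.n)).ncard := Set.ncard_image_le Set.finite_univ
            _ = S.n := by simp [Set.ncard_univ]
        exact add_le_add (key _) (key _)
    _ = 2 * S.n := by ring
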